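/- (Theorem: semi-invariants of filtered A_r-Dynkin quivers.) Let n ≥ 1 and r ≥ 2, and let Q be an arbitrary orientation of the A_r-Dynkin graph: vertices 1,…,r and, for each α ∈ {1,…,r−1}, an arrow a_α whose endpoint set {t(a_α), h(a_α)} equals {α, α+1}. Let U_n^r act on 𝔟_n^{⊕(r−1)} by (u_1,…,u_r)·(A_1,…,A_{r−1}) = (u_{h(a_α)} A_α u_{t(a_α)}^{−1})_{α}. Then a polynomial function f on 𝔟_n^{⊕(r−1)} is invariant under this action if and only if there is a polynomial g in (r−1)·n variables such that f(A_1,…,A_{r−1}) = g(((A_α)_{ii})_{1≤α≤r−1, 1≤i≤n}) for all tuples of upper triangular matrices; that is, ℂ[F•Rep(Q,β)]^{𝕌_β} = ℂ[𝔱_n^{⊕(r−1)}] for β = (n,…,n) with the complete standard filtration at each vertex. -/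
import Mathlib

/-- `M` is an upper triangular complex matrix (an element of `𝔟ₙ`). -/
def IsUT {n : ℕ} (M : Matrix (Fin n) (Fin n) ℂ) : Prop :=
  ∀ i j : Fin n, j < i → M i j = 0

/-- `M` is a unipotent upper triangular complex matrix (an element of `Uₙ`). -/
def IsUnipUT {n : ℕ} (M : Matrix (Fin n) (Fin n) ℂ) : Prop :=
  IsUT M ∧ ∀ i : Fin n, M i i = 1

lemma IsUT.mul {n : ℕ} {A B : Matrix (Fin n) (Fin n) ℂ} (hA : IsUT A) (hB : IsUT B) :
    IsUT (A * B) := by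
  intro i j hji
  rw [Matrix.mul_apply]
  refine Finset.sum_eq_zero fun k _ => ?_
  rcases lt_or_ge k i with h | h
  · rw [hA i k h, zero_mul]
  · rw [hB k j (lt_of_lt_of_le hji h), mul_zero]

lemma IsUT.diag_mul {n : ℕ} {A B : Matrix (Fin n) (Fin n) ℂ} (hA : IsUT A) (hB : IsUT B)
    (i : Fin n) : (A * B) i i = A i i * B i i := by
  rw [Matrix.mul_apply]
  refine Finset.sum_eq_single i (fun k _ hk => ?_) (by simp)
  rcases hk.lt_or_gt with h | h
  · rw [hA i k h, zero_mul]
  · rw [hB k i h, mul_zero]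

lemma isUT_inv_facts {n : ℕ} {A : Matrix (Fin n) (Fin n) ℂ} (hA : IsUT A)
    (hd : ∀ i, A i i ≠ 0) :
    IsUT A⁻¹ ∧ (∀ i, A⁻¹ i i = (A i i)⁻¹) ∧ A * A⁻¹ = 1 ∧ A⁻¹ * A = 1 := by
  have hbt : A.BlockTriangular id := fun i j h => hA i j h
  have hdet : IsUnit A.det := by
    rw [Matrix.det_of_upperTriangular hbt]
    exact isUnit_iff_ne_zero.mpr (Finset.prod_ne_zero_iff.mpr fun i _ => hd i)
  have : Invertible A := A.invertibleOfIsUnitDet hdet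
  have hinv : IsUT A⁻¹ := fun i j h => Matrix.blockTriangular_inv_of_blockTriangular hbt h
  refine ⟨hinv, fun i => ?_, Matrix.mul_nonsing_inv A hdet, Matrix.nonsing_inv_mul A hdet⟩
  have h1 : (A⁻¹ * A) i i = 1 := by rw [Matrix.nonsing_inv_mul A hdet, Matrix.one_apply_eq]
  rw [hinv.diag_mul hA] at h1
  have h2 : A⁻¹ i i * A i i = (A i i)⁻¹ * A i i := by
    rw [h1, inv_mul_cancel₀ (hd i)]
  exact mul_right_cancel₀ (hd i) h2

lemma eval_bind1 {σ τ : Type*} (f : τ → ℂ) (g : σ → MvPolynomial τ ℂ) (φ : MvPolynomial σ ℂ) :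
    MvPolynomial.eval f (MvPolynomial.bind₁ g φ)
      = MvPolynomial.eval (fun i => MvPolynomial.eval f (g i)) φ := by
  simpa using MvPolynomial.eval₂Hom_bind₁ (RingHom.id ℂ) f g φ

lemma orbit_diagonal (n r : ℕ) (tl hd : Fin (r - 1) → Fin r)
    (hor : ∀ α : Fin (r - 1),
      (((tl α : ℕ) = (α : ℕ) ∧ (hd α : ℕ) = (α : ℕ) + 1) ∨
       ((tl α : ℕ) = (α : ℕ) + 1 ∧ (hd α : ℕ) = (α : ℕ))))
    (A : Fin (r - 1) → Matrix (Fin n) (Fin n) ℂ)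
    (hA : ∀ α, IsUT (A α)) (hnz : ∀ α i, A α i i ≠ 0) :
    ∃ u : Fin r → Matrix (Fin n) (Fin n) ℂ, (∀ v, IsUnipUT (u v)) ∧
      ∀ α, u (hd α) * A α * (u (tl α))⁻¹ = Matrix.diagonal (fun i => A α i i) := by
  classical
  set D : Fin (r - 1) → Matrix (Fin n) (Fin n) ℂ :=
    fun α => Matrix.diagonal (fun i => A α i i) with hDdef
  have hDut : ∀ α, IsUT (D α) := fun α i j hj => Matrix.diagonal_apply_ne _ hj.ne'
  have hDdiag : ∀ α i, D α i i = A α i i := fun α i => Matrix.diagonal_apply_eq _ i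
  have hAf := fun α => isUT_inv_facts (hA α) (hnz α)
  have hDf := fun α => isUT_inv_facts (hDut α) (fun i => by rw [hDdiag]; exact hnz α i)
  set U : ℕ → Matrix (Fin n) (Fin n) ℂ := fun k => Nat.rec 1
    (fun k Uk => if h : k < r - 1 then
        (if (tl ⟨k, h⟩ : ℕ) = k then D ⟨k, h⟩ * Uk * (A ⟨k, h⟩)⁻¹
         else (D ⟨k, h⟩)⁻¹ * Uk * A ⟨k, h⟩)
      else 1) k with hUdef
  have hUs : ∀ k, U (k + 1) = if h : k < r - 1 then
        (if (tl ⟨k, h⟩ : ℕ) = k then D ⟨k, h⟩ * (U k) * (A ⟨k, h⟩)⁻¹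
         else (D ⟨k, h⟩)⁻¹ * (U k) * A ⟨k, h⟩)
      else 1 := fun k => rfl
  have hone : IsUnipUT (1 : Matrix (Fin n) (Fin n) ℂ) :=
    ⟨fun i j hj => Matrix.one_apply_ne hj.ne', fun i => Matrix.one_apply_eq i⟩
  have hUnip : ∀ k, IsUnipUT (U k) := by
    intro k
    induction k with
    | zero => exact hone
    | succ k ih =>
      rw [hUs]
      split_ifs with h h2
      · exact ⟨((hDut _).mul ih.1).mul (hAf _).1,
          fun i => by
            rw [((hDut _).mul ih.1).diag_mul (hAf _).1, (hDut _).diag_mul ih.1,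
              hDdiag, ih.2, (hAf _).2.1, mul_one, mul_inv_cancel₀ (hnz _ i)]⟩
      · exact ⟨((hDf _).1.mul ih.1).mul (hA _),
          fun i => by
            rw [((hDf _).1.mul ih.1).diag_mul (hA _), (hDf _).1.diag_mul ih.1,
              (hDf _).2.1, hDdiag, ih.2, mul_one, inv_mul_cancel₀ (hnz _ i)]⟩
      · exact hone
  refine ⟨fun v => U (v : ℕ), fun v => hUnip _, ?_⟩
  intro α
  have hα : (α : ℕ) < r - 1 := α.isLt
  have hUk := hUnip (α : ℕ)
  have hUf := isUT_inv_facts hUk.1 (fun i => by rw [hUk.2 i]; exact one_ne_zero)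
  show U ((hd α : ℕ)) * A α * (U ((tl α : ℕ)))⁻¹ = D α
  rcases hor α with ⟨ht, hh⟩ | ⟨ht, hh⟩
  · have e1 : U ((α : ℕ) + 1) = D α * U (α : ℕ) * (A α)⁻¹ := by
      rw [hUs, dif_pos hα]
      simp only [Fin.eta]
      rw [if_pos ht]
    rw [hh, ht, e1, mul_assoc (D α * U (α : ℕ)), (hAf α).2.2.2, mul_one,
      mul_assoc, hUf.2.2.1, mul_one]
  · have e1 : U ((α : ℕ) + 1) = (D α)⁻¹ * U (α : ℕ) * A α := by
      rw [hUs, dif_pos hα]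
      simp only [Fin.eta]
      rw [if_neg (by omega)]
    have hinv : (U ((α : ℕ) + 1))⁻¹ = (A α)⁻¹ * (U (α : ℕ))⁻¹ * D α := by
      apply Matrix.inv_eq_right_inv
      rw [e1]
      simp only [mul_assoc]
      rw [← mul_assoc (A α) (A α)⁻¹, (hAf α).2.2.1, one_mul,
        ← mul_assoc (U (α : ℕ)) (U (α : ℕ))⁻¹, hUf.2.2.1, one_mul, (hDf α).2.2.2]
    rw [hh, ht, hinv]
    simp only [mul_assoc]
    rw [← mul_assoc (A α) (A α)⁻¹, (hAf α).2.2.1, one_mul,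
      ← mul_assoc (U (α : ℕ)) (U (α : ℕ))⁻¹, hUf.2.2.1, one_mul]

/-- Semi-invariants of filtered `A_r`-Dynkin quivers:
for any orientation of the `A_r`-Dynkin graph (vertices `Fin r`, arrows `Fin (r-1)`,
the `α`-th arrow joining the vertices `α` and `α+1` in either direction), a polynomial
function `f` on `𝔟ₙ^{⊕(r-1)}` is invariant under the change-of-basis action of
`Uₙ^r` iff it is a polynomial in the diagonal entries of the matrices; i.e.
`ℂ[F•Rep(Q,β)]^{𝕌_β} = ℂ[𝔱ₙ^{⊕(r-1)}]`. -/
theorem semiInvariants_filtered_Ar_Dynkin_quiver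
    (n r : ℕ) (hn : 1 ≤ n) (hr : 2 ≤ r)
    (tl hd : Fin (r - 1) → Fin r)
    (hor : ∀ α : Fin (r - 1),
      (((tl α : ℕ) = (α : ℕ) ∧ (hd α : ℕ) = (α : ℕ) + 1) ∨
       ((tl α : ℕ) = (α : ℕ) + 1 ∧ (hd α : ℕ) = (α : ℕ))))
    (f : (Fin (r - 1) → Matrix (Fin n) (Fin n) ℂ) → ℂ)
    (hf : ∃ P : MvPolynomial (Fin (r - 1) × Fin n × Fin n) ℂ,
      ∀ A, f A = MvPolynomial.eval (fun q => A q.1 q.2.1 q.2.2) P) :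
    (∀ u : Fin r → Matrix (Fin n) (Fin n) ℂ, (∀ v, IsUnipUT (u v)) →
        ∀ A : Fin (r - 1) → Matrix (Fin n) (Fin n) ℂ, (∀ α, IsUT (A α)) →
          f (fun α => u (hd α) * A α * (u (tl α))⁻¹) = f A) ↔
      ∃ g : MvPolynomial (Fin (r - 1) × Fin n) ℂ,
        ∀ A : Fin (r - 1) → Matrix (Fin n) (Fin n) ℂ, (∀ α, IsUT (A α)) →
          f A = MvPolynomial.eval (fun q => A q.1 q.2 q.2) g := by
  classical
  obtain ⟨P, hP⟩ := hf
  constructor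
  · intro hinvar
    refine ⟨MvPolynomial.bind₁ (fun q : Fin (r - 1) × Fin n × Fin n =>
        if q.2.1 = q.2.2 then MvPolynomial.X (q.1, q.2.1) else 0) P, ?_⟩
    set Qp := MvPolynomial.bind₁ (fun q : Fin (r - 1) × Fin n × Fin n =>
        if q.2.2 < q.2.1 then 0 else MvPolynomial.X q) P with hQp
    set Qd := MvPolynomial.bind₁ (fun q : Fin (r - 1) × Fin n × Fin n =>
        if q.2.1 = q.2.2 then MvPolynomial.X q else 0) P with hQd
    set p : MvPolynomial (Fin (r - 1) × Fin n × Fin n) ℂ :=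
      ∏ s : Fin (r - 1) × Fin n, MvPolynomial.X (s.1, s.2, s.2) with hp
    have hpne : p ≠ 0 := by
      intro h
      have h1 : MvPolynomial.eval (fun _ => (1 : ℂ)) p = 1 := by
        rw [hp, map_prod]
        simp
      rw [h] at h1
      simp at h1
    have hkey : Qp = Qd := by
      have hmul : (Qp - Qd) * p = 0 := by
        apply MvPolynomial.funext
        intro v
        rw [map_mul, map_sub, map_zero]
        by_cases hv : ∀ s : Fin (r - 1) × Fin n, v (s.1, s.2, s.2) ≠ 0
        · set A : Fin (r - 1) → Matrix (Fin n) (Fin n) ℂ :=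
            fun α => Matrix.of fun i j => if j < i then 0 else v (α, i, j) with hAdef
          have hAut : ∀ α, IsUT (A α) := by
            intro α i j hj
            simp only [hAdef, Matrix.of_apply, if_pos hj]
          have hAdiag : ∀ α i, A α i i = v (α, i, i) := by
            intro α i
            simp [hAdef]
          have hnz : ∀ α i, A α i i ≠ 0 := fun α i => by
            rw [hAdiag]; exact hv (α, i)
          obtain ⟨u, hu, huA⟩ := orbit_diagonal n r tl hd hor A hAut hnz
          have h1 := hinvar u hu A hAut
          simp only [huA] at h1
          have eQp : MvPolynomial.eval v Qp = f A := by
            rw [hQp, eval_bind1, hP A]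
            refine congrArg (fun w => MvPolynomial.eval w P) (funext fun q => ?_)
            obtain ⟨α, i, j⟩ := q
            by_cases hq : j < i
            · simp [hq, hAdef]
            · simp [hq, hAdef]
          have eQd : MvPolynomial.eval v Qd
              = f (fun α => Matrix.diagonal (fun i => A α i i)) := by
            rw [hQd, eval_bind1, hP]
            refine congrArg (fun w => MvPolynomial.eval w P) (funext fun q => ?_)
            obtain ⟨α, i, j⟩ := q
            by_cases hq : i = j
            · subst hq
              simp [Matrix.diagonal_apply_eq, hAdiag]
            · simp [hq, Matrix.diagonal_apply_ne _ hq]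
          rw [eQp, eQd, h1, sub_self, zero_mul]
        · push_neg at hv
          obtain ⟨s, hs⟩ := hv
          have h0 : MvPolynomial.eval v p = 0 := by
            rw [hp, map_prod]
            refine Finset.prod_eq_zero (Finset.mem_univ s) ?_
            simp [hs]
          rw [h0, mul_zero]
      rcases mul_eq_zero.mp hmul with h | h
      · exact sub_eq_zero.mp h
      · exact absurd h hpne
    intro A hAut
    have eQp : MvPolynomial.eval (fun q => A q.1 q.2.1 q.2.2) Qp = f A := by
      rw [hQp, eval_bind1, hP A]
      refine congrArg (fun w => MvPolynomial.eval w P) (funext fun q => ?_)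
      obtain ⟨α, i, j⟩ := q
      by_cases hq : j < i
      · simp [hq, hAut α i j hq]
      · simp [hq]
    have eQd : MvPolynomial.eval (fun q => A q.1 q.2.1 q.2.2) Qd
        = MvPolynomial.eval (fun q => A q.1 q.2 q.2)
            (MvPolynomial.bind₁ (fun q : Fin (r - 1) × Fin n × Fin n =>
              if q.2.1 = q.2.2 then MvPolynomial.X (q.1, q.2.1) else 0) P) := by
      rw [hQd, eval_bind1, eval_bind1]
      refine congrArg (fun w => MvPolynomial.eval w P) (funext fun q => ?_)
      obtain ⟨α, i, j⟩ := q
      by_cases hq : i = j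
      · subst hq; simp
      · simp [hq]
    rw [← eQp, hkey, eQd]
  · rintro ⟨g, hg⟩ u hu A hAut
    have huinv := fun v => isUT_inv_facts (hu v).1 (fun i => by
      rw [(hu v).2 i]; exact one_ne_zero)
    have hA' : ∀ α, IsUT (u (hd α) * A α * (u (tl α))⁻¹) :=
      fun α => ((hu (hd α)).1.mul (hAut α)).mul (huinv (tl α)).1
    rw [hg _ hA', hg A hAut]
    refine congrArg (fun w => MvPolynomial.eval w g) (funext fun q => ?_)
    show (u (hd q.1) * A q.1 * (u (tl q.1))⁻¹) q.2 q.2 = A q.1 q.2 q.2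
    rw [((hu (hd q.1)).1.mul (hAut q.1)).diag_mul (huinv (tl q.1)).1,
      (hu (hd q.1)).1.diag_mul (hAut q.1), (hu (hd q.1)).2, one_mul,
      (huinv (tl q.1)).2.1, (hu (tl q.1)).2, inv_one, mul_one]
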